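/- (Propagation of the leaf-like property.) Let ≤ be a rooted tree order on a finite vertex set V, and let G be its comparability graph (distinct u, w adjacent iff comparable). Let θ be a second-order stationary point of the Kuramoto energy E_G, and let A be a non-minimal vertex. Call a vertex v leaf-like at θ if v_v = v_j for every strict descendant j of v (where v_k = (cos θ_k, sin θ_k)); in particular every leaf is leaf-like. If every child of A (every maximal element among the strict descendants of A) is leaf-like at θ, then A is leaf-like at θ, i.e., v_A = v_j for every strict descendant j of A. -/

import Mathlib

open Finset

/-- The phasor of vertex `i` at state `θ`: the unit vector `(cos θᵢ, sin θᵢ) ∈ ℝ²`. -/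
noncomputable def phasor {V : Type*} (θ : V → ℝ) (i : V) : ℝ × ℝ :=
  (Real.cos (θ i), Real.sin (θ i))

/-- The Kuramoto energy `E_G(θ) = (1/2)·Σ_{i,j} A_{ij}(1 − cos(θ_i − θ_j))`. -/
noncomputable def kuramotoEnergy {V : Type*} [Fintype V] (G : SimpleGraph V)
    [DecidableRel G.Adj] (θ : V → ℝ) : ℝ :=
  (1 / 2) * ∑ i, ∑ j, (if G.Adj i j then (1 : ℝ) else 0) * (1 - Real.cos (θ i - θ j))

/-- The Hessian of the Kuramoto energy at `θ`: off-diagonal entries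
`−A_{ij} cos(θ_i − θ_j)` and diagonal entries `Σ_{k ≠ i} A_{ik} cos(θ_i − θ_k)`. -/
noncomputable def kuramotoHessian {V : Type*} [Fintype V] [DecidableEq V] (G : SimpleGraph V)
    [DecidableRel G.Adj] (θ : V → ℝ) : Matrix V V ℝ :=
  Matrix.of fun i j =>
    if i = j then ∑ k ∈ Finset.univ.erase i, (if G.Adj i k then Real.cos (θ i - θ k) else 0)
    else -(if G.Adj i j then Real.cos (θ i - θ j) else 0)

/-- `θ` is a second-order stationary point of the Kuramoto energy: the gradient
`(∇E_G(θ))_i = Σ_j A_{ij} sin(θ_i − θ_j)` vanishes and the Hessian is positive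
semidefinite. -/
def IsSOSP {V : Type*} [Fintype V] [DecidableEq V] (G : SimpleGraph V)
    [DecidableRel G.Adj] (θ : V → ℝ) : Prop :=
  (∀ i, ∑ j, (if G.Adj i j then (1 : ℝ) else 0) * Real.sin (θ i - θ j) = 0) ∧
  (kuramotoHessian G θ).PosSemidef

/-- The comparability graph of a partial order: distinct `u, w` are adjacent iff
`u < w` or `w < u`. -/
def comparabilityGraph (V : Type*) [PartialOrder V] : SimpleGraph V where
  Adj u w := u < w ∨ w < u
  symm := ⟨fun _ _ h => Or.symm h⟩
  loopless := ⟨fun u h => by rcases h with h | h <;> exact lt_irrefl u h⟩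

instance {V : Type*} [PartialOrder V] [DecidableRel ((· < ·) : V → V → Prop)] :
    DecidableRel (comparabilityGraph V).Adj :=
  fun u w => inferInstanceAs (Decidable (u < w ∨ w < u))

/-- A vertex `v` is leaf-like at state `θ` if its phasor agrees with the phasor of every
strict descendant of `v`. -/
def LeafLike {V : Type*} [PartialOrder V] (θ : V → ℝ) (v : V) : Prop :=
  ∀ j : V, j < v → phasor θ j = phasor θ v

section Aux

open Matrix

/-- The Hessian quadratic form. -/
lemma aux_quad_form {V : Type*} [Fintype V] [DecidableEq V] (G : SimpleGraph V)
    [DecidableRel G.Adj] (θ : V → ℝ) (h : (kuramotoHessian G θ).PosSemidef) (x : V → ℝ) :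
    0 ≤ ∑ i, ∑ j, (if G.Adj i j then Real.cos (θ i - θ j) else 0) * (x i * (x i - x j)) := by
  have hx := h.dotProduct_mulVec_nonneg x
  have hsx : star x = x := by funext i; simp
  rw [hsx] at hx
  refine le_trans hx (le_of_eq ?_)
  show (∑ i, x i * ∑ j, (kuramotoHessian G θ) i j * x j) = _
  refine Finset.sum_congr rfl (fun i _ => ?_)
  rw [← Finset.add_sum_erase _ (fun j => (kuramotoHessian G θ) i j * x j) (Finset.mem_univ i)]
  rw [← Finset.add_sum_erase _ (fun j => (if G.Adj i j then Real.cos (θ i - θ j) else 0) *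
    (x i * (x i - x j))) (Finset.mem_univ i)]
  have h1 : (kuramotoHessian G θ) i i = ∑ k ∈ Finset.univ.erase i,
      (if G.Adj i k then Real.cos (θ i - θ k) else 0) := by
    simp [kuramotoHessian]
  have h2 : ∀ j ∈ Finset.univ.erase i, (kuramotoHessian G θ) i j * x j
      = -((if G.Adj i j then Real.cos (θ i - θ j) else 0) * x j) := by
    intro j hj
    have hij : i ≠ j := (Finset.ne_of_mem_erase hj).symm
    simp [kuramotoHessian, hij]
  rw [Finset.sum_congr rfl h2, h1]
  rw [if_neg (G.irrefl (v := i))]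
  rw [mul_add, Finset.sum_mul, Finset.mul_sum, Finset.mul_sum, ← Finset.sum_add_distrib]
  rw [zero_mul, zero_add]
  refine Finset.sum_congr rfl (fun j _ => ?_)
  ring

lemma aux_phasor_cos {V : Type*} {θ : V → ℝ} {a b : V} (h : phasor θ a = phasor θ b)
    (t : ℝ) : Real.cos (θ a - t) = Real.cos (θ b - t) := by
  have h1 : Real.cos (θ a) = Real.cos (θ b) := congrArg Prod.fst h
  have h2 : Real.sin (θ a) = Real.sin (θ b) := congrArg Prod.snd h
  rw [Real.cos_sub, Real.cos_sub, h1, h2]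

lemma aux_phasor_sin {V : Type*} {θ : V → ℝ} {a b : V} (h : phasor θ a = phasor θ b)
    (t : ℝ) : Real.sin (θ a - t) = Real.sin (θ b - t) := by
  have h1 : Real.cos (θ a) = Real.cos (θ b) := congrArg Prod.fst h
  have h2 : Real.sin (θ a) = Real.sin (θ b) := congrArg Prod.snd h
  rw [Real.sin_sub, Real.sin_sub, h1, h2]

lemma aux_phasor_sin_zero {V : Type*} {θ : V → ℝ} {a b : V} (h : phasor θ a = phasor θ b) :
    Real.sin (θ b - θ a) = 0 := by
  have h1 : Real.cos (θ a) = Real.cos (θ b) := congrArg Prod.fst h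
  have h2 : Real.sin (θ a) = Real.sin (θ b) := congrArg Prod.snd h
  rw [Real.sin_sub, h1, h2]; ring

lemma aux_double_filter {V : Type*} [Fintype V] (p q : V → Prop)
    [DecidablePred p] [DecidablePred q] (f : V → V → ℝ) :
    ∑ i ∈ Finset.univ.filter p, ∑ j ∈ Finset.univ.filter q, f i j
      = ∑ i : V, ∑ j : V, if p i ∧ q j then f i j else 0 := by
  rw [Finset.sum_filter]
  refine Finset.sum_congr rfl (fun i _ => ?_)
  by_cases hi : p i
  · rw [if_pos hi, Finset.sum_filter]
    refine Finset.sum_congr rfl (fun j _ => ?_)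
    by_cases hj : q j
    · rw [if_pos hj, if_pos ⟨hi, hj⟩]
    · rw [if_neg hj, if_neg (fun h => hj h.2)]
  · rw [if_neg hi]
    exact (Finset.sum_eq_zero (fun j _ => if_neg (fun h => hi h.1))).symm

lemma aux_comparability_adj {V : Type*} [PartialOrder V] (u w : V) :
    (comparabilityGraph V).Adj u w ↔ u < w ∨ w < u := Iff.rfl

end Aux

/-- **Propagation of the leaf-like property.** On the comparability graph of a rooted
tree order, at a second-order stationary point `θ` of the Kuramoto energy: if `A` is a
non-minimal vertex all of whose children (maximal elements among the strict descendants
of `A`) are leaf-like at `θ`, then `A` is leaf-like at `θ`. -/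
theorem stmt_13 {V : Type*} [Fintype V] [DecidableEq V] [PartialOrder V]
    [DecidableRel ((· < ·) : V → V → Prop)]
    (hroot : ∃ r : V, ∀ v : V, v ≤ r)
    (hchain : ∀ v : V, IsChain (· ≤ ·) {u : V | v < u})
    (θ : V → ℝ) (hθ : IsSOSP (comparabilityGraph V) θ)
    (A : V) (hA : ∃ j : V, j < A)
    (hchildren : ∀ c : V, c < A → (∀ u : V, u < A → ¬ c < u) → LeafLike θ c) :
    LeafLike θ A := by
  classical
  obtain ⟨j₀, hj₀⟩ := hA
  set D : Finset V := univ.filter (fun v => v < A) with hDdef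
  set C : Finset V := univ.filter (fun v => A < v) with hCdef
  set X : ℝ := ∑ u ∈ C, Real.cos (θ A - θ u) with hXdef
  set Y : ℝ := ∑ u ∈ C, Real.sin (θ A - θ u) with hYdef
  have hAnotC : A ∉ C := by simp [hCdef]
  have hAnotD : A ∉ D := by simp [hDdef]
  have hj₀D : j₀ ∈ D := by simp [hDdef, hj₀]
  -- the quadratic form inequality
  have hquad : ∀ x : V → ℝ, 0 ≤ ∑ i, ∑ j,
      (if i < j ∨ j < i then Real.cos (θ i - θ j) else 0) * (x i * (x i - x j)) := by
    intro x
    have h := aux_quad_form (comparabilityGraph V) θ hθ.2 x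
    simpa only [aux_comparability_adj] using h
  -- gradient split: for every v
  have hgrad : ∀ v : V, (∑ j ∈ univ.filter (fun j => j < v), Real.sin (θ v - θ j))
      + (∑ j ∈ univ.filter (fun j => v < j), Real.sin (θ v - θ j)) = 0 := by
    intro v
    have h : ∑ j, (if v < j ∨ j < v then (1:ℝ) else 0) * Real.sin (θ v - θ j) = 0 := by
      have h0 := hθ.1 v
      simpa only [aux_comparability_adj] using h0
    rw [← h, Finset.sum_filter, Finset.sum_filter, ← Finset.sum_add_distrib]
    refine Finset.sum_congr rfl (fun j _ => ?_)
    by_cases h1 : j < v <;> by_cases h2 : v < j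
    · exact absurd (lt_trans h1 h2) (lt_irrefl _)
    · rw [if_pos h1, if_neg h2, if_pos (Or.inr h1 : v < j ∨ j < v)]; ring
    · rw [if_neg h1, if_pos h2, if_pos (Or.inl h2 : v < j ∨ j < v)]; ring
    · rw [if_neg h1, if_neg h2, if_neg (fun hadj' : v < j ∨ j < v => by
        rcases hadj' with h | h; exacts [h2 h, h1 h])]; ring
  -- the cut inequality
  have hcut : ∀ B : V, 0 ≤ ∑ i ∈ univ.filter (fun v => v ≤ B),
      ∑ j ∈ univ.filter (fun v => B < v), Real.cos (θ i - θ j) := by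
    intro B
    have h := hquad (fun v => if v ≤ B then 1 else 0)
    rw [aux_double_filter (fun v => v ≤ B) (fun v => B < v) (fun i j => Real.cos (θ i - θ j))]
    refine le_trans h (le_of_eq ?_)
    refine Finset.sum_congr rfl (fun i _ => Finset.sum_congr rfl (fun j _ => ?_))
    by_cases hi : i ≤ B
    · by_cases hj : B < j
      · have hAdj : i < j ∨ j < i := Or.inl (lt_of_le_of_lt hi hj)
        have hjB : ¬ j ≤ B := hj.not_ge
        simp [hi, hj, hAdj, hjB]
      · by_cases hjB : j ≤ B
        · simp [hi, hj, hjB]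
        · have hnadj : ¬ (i < j ∨ j < i) := by
            intro hadj'
            rcases hadj' with hlt | hlt
            · rcases eq_or_lt_of_le hi with heq | hiB
              · exact hj (heq ▸ hlt)
              · have hjmem : j ∈ {u : V | i < u} := hlt
                have hBmem : B ∈ {u : V | i < u} := hiB
                have hne : j ≠ B := fun e => hjB (le_of_eq e)
                rcases hchain i hjmem hBmem hne with hle | hle
                · exact hjB hle
                · exact hj (lt_of_le_of_ne hle (Ne.symm hne))
            · exact hjB (le_trans (le_of_lt hlt) hi)
          simp [hi, hj, hjB, hnadj]
    · simp [hi]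
  -- children exist above any descendant
  have hchild : ∀ j : V, j < A → ∃ c : V, j ≤ c ∧ c < A ∧ ∀ u : V, u < A → ¬ c < u := by
    intro j hj
    obtain ⟨m, hm, hmax'⟩ := Finset.exists_maximal
      (s := univ.filter (fun u => j ≤ u ∧ u < A)) ⟨j, by simp [hj]⟩
    have hmax : ∀ x ∈ univ.filter (fun u => j ≤ u ∧ u < A), ¬ m < x :=
      fun x hx hlt => hlt.not_ge (hmax' hx hlt.le)
    rw [Finset.mem_filter] at hm
    refine ⟨m, hm.2.1, hm.2.2, fun u hu hmu => ?_⟩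
    exact hmax u (by
      rw [Finset.mem_filter]
      exact ⟨Finset.mem_univ u, le_trans hm.2.1 (le_of_lt hmu), hu⟩) hmu
  -- the common "ancestors of a child" description
  have hchain' : ∀ c : V, c < A → (∀ u : V, u < A → ¬ c < u) →
      univ.filter (fun v => c < v) = insert A C := by
    intro c hcA hcmax
    ext j
    simp only [Finset.mem_filter, Finset.mem_insert, Finset.mem_univ, true_and, hCdef]
    constructor
    · intro hcj
      by_cases hjA : j = A
      · exact Or.inl hjA
      · right
        have hjmem : j ∈ {u : V | c < u} := hcj
        have hAmem : A ∈ {u : V | c < u} := hcA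
        rcases hchain c hjmem hAmem hjA with hle | hle
        · exact absurd hcj (hcmax j (lt_of_le_of_ne hle hjA))
        · exact lt_of_le_of_ne hle (Ne.symm hjA)
    · rintro (heq | hAj)
      · rw [heq]; exact hcA
      · exact lt_trans hcA hAj
  set Q : ℝ := Real.sqrt ((1 + X) ^ 2 + Y ^ 2) with hQdef
  have hQnn : 0 ≤ Q := Real.sqrt_nonneg _
  -- key relation for every descendant
  have hkey : ∀ j : V, j < A →
      Real.cos (θ j - θ A) * Q = 1 + X ∧ Real.sin (θ j - θ A) * Q = -Y := by
    intro j hjA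
    obtain ⟨c, hjc, hcA, hcmax⟩ := hchild j hjA
    have hll : LeafLike θ c := hchildren c hcA hcmax
    have hph : phasor θ j = phasor θ c := by
      rcases eq_or_lt_of_le hjc with heq | hlt
      · rw [heq]
      · exact hll j hlt
    set cc : ℝ := Real.cos (θ c - θ A) with hccdef
    set sc : ℝ := Real.sin (θ c - θ A) with hscdef
    have hpyth : sc ^ 2 + cc ^ 2 = 1 := Real.sin_sq_add_cos_sq _
    -- gradient at c
    have hI : sc * (1 + X) + cc * Y = 0 := by
      have h := hgrad c
      have hz : ∑ j ∈ univ.filter (fun j => j < c), Real.sin (θ c - θ j) = 0 := by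
        refine Finset.sum_eq_zero (fun k hk => ?_)
        rw [Finset.mem_filter] at hk
        exact aux_phasor_sin_zero (hll k hk.2)
      rw [hz, zero_add, hchain' c hcA hcmax, Finset.sum_insert hAnotC] at h
      have hsum : ∑ u ∈ C, Real.sin (θ c - θ u) = sc * X + cc * Y := by
        rw [hXdef, hYdef, Finset.mul_sum, Finset.mul_sum, ← Finset.sum_add_distrib]
        refine Finset.sum_congr rfl (fun u _ => ?_)
        rw [show θ c - θ u = (θ c - θ A) + (θ A - θ u) by ring, Real.sin_add]
      rw [hsum] at h
      linarith
    -- cut at c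
    have hII : 0 ≤ cc * (1 + X) - sc * Y := by
      have h := hcut c
      have hconst : ∀ i ∈ univ.filter (fun v => v ≤ c),
          ∑ j ∈ univ.filter (fun v => c < v), Real.cos (θ i - θ j)
            = cc * (1 + X) - sc * Y := by
        intro i hi
        rw [Finset.mem_filter] at hi
        have hphi : phasor θ i = phasor θ c := by
          rcases eq_or_lt_of_le hi.2 with heq | hlt
          · rw [heq]
          · exact hll i hlt
        rw [hchain' c hcA hcmax, Finset.sum_insert hAnotC]
        have hsum : ∑ u ∈ C, Real.cos (θ i - θ u) = cc * X - sc * Y := by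
          rw [hXdef, hYdef, Finset.mul_sum, Finset.mul_sum, ← Finset.sum_sub_distrib]
          refine Finset.sum_congr rfl (fun u _ => ?_)
          rw [aux_phasor_cos hphi (θ u),
            show θ c - θ u = (θ c - θ A) + (θ A - θ u) by ring, Real.cos_add]
        rw [hsum, aux_phasor_cos hphi (θ A)]
        ring
      rw [Finset.sum_congr rfl hconst, Finset.sum_const, nsmul_eq_mul] at h
      have hcard : 0 < ((univ.filter (fun v => v ≤ c)).card : ℝ) := by
        have : c ∈ univ.filter (fun v => v ≤ c) := by simp
        exact_mod_cast Finset.card_pos.mpr ⟨c, this⟩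
      nlinarith
    set Rc : ℝ := cc * (1 + X) - sc * Y with hRcdef
    have h1 : cc * Rc = 1 + X := by
      rw [hRcdef]; linear_combination (1 + X) * hpyth - sc * hI
    have h2 : sc * Rc = -Y := by
      rw [hRcdef]; linear_combination cc * hI - Y * hpyth
    have hR2 : Rc ^ 2 = (1 + X) ^ 2 + Y ^ 2 := by
      linear_combination (cc * Rc + (1 + X)) * h1 + (sc * Rc - Y) * h2 - Rc ^ 2 * hpyth
    have hRQ : Q = Rc := by
      rw [hQdef, ← hR2]
      exact Real.sqrt_sq hII
    constructor
    · rw [aux_phasor_cos hph (θ A), hRQ]; exact h1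
    · rw [aux_phasor_sin hph (θ A), hRQ]; exact h2
  -- gradient at A
  have hgradA : ∑ j ∈ D, Real.sin (θ j - θ A) = Y := by
    have h := hgrad A
    have h2 : ∑ j ∈ univ.filter (fun j => j < A), Real.sin (θ A - θ j)
        = -∑ j ∈ D, Real.sin (θ j - θ A) := by
      rw [← Finset.sum_neg_distrib]
      refine Finset.sum_congr rfl (fun j _ => ?_)
      rw [show θ A - θ j = -(θ j - θ A) by ring, Real.sin_neg]
    rw [h2] at h
    have h3 : ∑ j ∈ univ.filter (fun j => A < j), Real.sin (θ A - θ j) = Y := rfl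
    rw [h3] at h
    linarith
  -- diagonal of the Hessian at A
  have hdiag : 0 ≤ (∑ j ∈ D, Real.cos (θ j - θ A)) + X := by
    have h := hquad (fun v => if v = A then 1 else 0)
    refine le_trans h (le_of_eq ?_)
    have hterm : ∀ i : V, ∀ j : V,
        (if i < j ∨ j < i then Real.cos (θ i - θ j) else 0) *
          ((if i = A then (1:ℝ) else 0) * ((if i = A then (1:ℝ) else 0) - (if j = A then (1:ℝ) else 0)))
        = if i = A then ((if j < A then Real.cos (θ A - θ j) else 0)
            + (if A < j then Real.cos (θ A - θ j) else 0)) else 0 := by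
      intro i j
      by_cases hi : i = A
      · by_cases hj : j = A
        · simp [hi, hj, lt_irrefl]
        · by_cases h1 : j < A <;> by_cases h2 : A < j
          · exact absurd (lt_trans h1 h2) (lt_irrefl j)
          · simp [hi, hj, h1, h2]
          · simp [hi, hj, h1, h2]
          · simp [hi, hj, h1, h2]
      · simp [hi]
    rw [Finset.sum_congr rfl (fun i (_ : i ∈ univ) =>
      Finset.sum_congr rfl (fun j (_ : j ∈ univ) => hterm i j))]
    have hpull : ∀ i : V, (∑ j, if i = A then ((if j < A then Real.cos (θ A - θ j) else 0)
        + (if A < j then Real.cos (θ A - θ j) else 0)) else 0)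
        = if i = A then (∑ j, ((if j < A then Real.cos (θ A - θ j) else 0)
        + (if A < j then Real.cos (θ A - θ j) else 0))) else 0 := by
      intro i
      by_cases hi : i = A
      · simp [hi]
      · simp [hi]
    rw [Finset.sum_congr rfl (fun i (_ : i ∈ univ) => hpull i)]
    rw [Finset.sum_ite_eq' univ A (fun _ => ∑ j, ((if j < A then Real.cos (θ A - θ j) else 0)
            + (if A < j then Real.cos (θ A - θ j) else 0)))]
    rw [if_pos (Finset.mem_univ A)]
    rw [Finset.sum_add_distrib, ← Finset.sum_filter, ← Finset.sum_filter]
    have hflip : ∑ j ∈ univ.filter (fun j => j < A), Real.cos (θ A - θ j)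
        = ∑ j ∈ D, Real.cos (θ j - θ A) := by
      refine Finset.sum_congr rfl (fun j _ => ?_)
      rw [show θ A - θ j = -(θ j - θ A) by ring, Real.cos_neg]
    rw [hflip]
  -- the cut at A, expanded
  have hcutA : 0 ≤ X + ∑ j ∈ D, (Real.cos (θ j - θ A) * X - Real.sin (θ j - θ A) * Y) := by
    have h := hcut A
    have hsplit : univ.filter (fun v => v ≤ A) = insert A D := by
      ext j
      simp only [Finset.mem_filter, Finset.mem_insert, Finset.mem_univ, true_and, hDdef]
      constructor
      · intro hle
        rcases eq_or_lt_of_le hle with heq | hlt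
        · exact Or.inl heq
        · exact Or.inr hlt
      · rintro (heq | hlt)
        · exact le_of_eq heq
        · exact le_of_lt hlt
    rw [hsplit, Finset.sum_insert hAnotD] at h
    have hinner : ∀ i : V, ∑ j ∈ univ.filter (fun v => A < v), Real.cos (θ i - θ j)
        = Real.cos (θ i - θ A) * X - Real.sin (θ i - θ A) * Y := by
      intro i
      rw [hXdef, hYdef, Finset.mul_sum, Finset.mul_sum, ← Finset.sum_sub_distrib]
      refine Finset.sum_congr rfl (fun u _ => ?_)
      rw [show θ i - θ u = (θ i - θ A) + (θ A - θ u) by ring, Real.cos_add]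
    rw [hinner A, Finset.sum_congr rfl (fun j (_ : j ∈ D) => hinner j)] at h
    rw [sub_self, Real.cos_zero, Real.sin_zero, one_mul, zero_mul, sub_zero] at h
    exact h
  -- the final case analysis
  by_cases h0 : 1 + X = 0 ∧ Y = 0
  · exfalso
    obtain ⟨hX0, hY0⟩ := h0
    have hXval : X = -1 := by linarith
    have e1 : ∑ j ∈ D, (Real.cos (θ j - θ A) * X - Real.sin (θ j - θ A) * Y)
        = -∑ j ∈ D, Real.cos (θ j - θ A) := by
      rw [← Finset.sum_neg_distrib]
      refine Finset.sum_congr rfl (fun j _ => ?_)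
      rw [hXval, hY0]; ring
    rw [e1, hXval] at hcutA
    rw [hXval] at hdiag
    linarith
  · -- Q > 0 case
    have hQ2 : Q ^ 2 = (1 + X) ^ 2 + Y ^ 2 := by
      rw [hQdef]
      exact Real.sq_sqrt (by positivity)
    have hQpos : 0 < Q := by
      rcases lt_or_eq_of_le hQnn with hlt | heq
      · exact hlt
      · exfalso
        apply h0
        have : (1 + X) ^ 2 + Y ^ 2 = 0 := by rw [← hQ2, ← heq]; ring
        constructor <;> nlinarith [sq_nonneg (1 + X), sq_nonneg Y]
    -- Y = 0
    have hsumsin : (∑ j ∈ D, Real.sin (θ j - θ A)) * Q = -(D.card : ℝ) * Y := by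
      rw [Finset.sum_mul]
      rw [Finset.sum_congr rfl (fun j hj => (hkey j (by
        rw [hDdef, Finset.mem_filter] at hj; exact hj.2)).2)]
      rw [Finset.sum_const, nsmul_eq_mul]
      ring
    have hYzero : Y = 0 := by
      rw [hgradA] at hsumsin
      have hNnn : (0:ℝ) ≤ (D.card : ℝ) := by positivity
      nlinarith
    have hX1 : 1 + X ≠ 0 := fun hc => h0 ⟨hc, hYzero⟩
    -- every descendant has sin = 0 and cos = (1+X)/Q
    have hsin0 : ∀ j : V, j < A → Real.sin (θ j - θ A) = 0 := by
      intro j hjA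
      have h := (hkey j hjA).2
      rw [hYzero, neg_zero] at h
      rcases mul_eq_zero.mp h with h' | h'
      · exact h'
      · exact absurd h' (ne_of_gt hQpos)
    have hcos1 : ∀ j : V, j < A → Real.cos (θ j - θ A) = 1 := by
      intro j hjA
      have hc := (hkey j hjA).1
      have hs := hsin0 j hjA
      have hpyth : Real.sin (θ j - θ A) ^ 2 + Real.cos (θ j - θ A) ^ 2 = 1 :=
        Real.sin_sq_add_cos_sq _
      rw [hs] at hpyth
      have hsq : Real.cos (θ j - θ A) ^ 2 = 1 := by linarith
      have : (Real.cos (θ j - θ A) - 1) * (Real.cos (θ j - θ A) + 1) = 0 := by nlinarith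
      rcases mul_eq_zero.mp this with h' | h'
      · linarith
      · exfalso
        -- cos = -1 for j, hence for all descendants, contradiction with hdiag
        have hcj : Real.cos (θ j - θ A) = -1 := by linarith
        have hXQ : 1 + X = -Q := by
          have := (hkey j hjA).1
          rw [hcj] at this; linarith
        have hallneg : ∀ k ∈ D, Real.cos (θ k - θ A) = -1 := by
          intro k hk
          have hkA : k < A := by rw [hDdef, Finset.mem_filter] at hk; exact hk.2
          have hck := (hkey k hkA).1
          rw [hXQ] at hck
          have : Real.cos (θ k - θ A) * Q = (-1) * Q := by rw [hck]; ring
          exact mul_right_cancel₀ (ne_of_gt hQpos) this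
        have hsum : ∑ k ∈ D, Real.cos (θ k - θ A) = -(D.card : ℝ) := by
          rw [Finset.sum_congr rfl hallneg, Finset.sum_const, nsmul_eq_mul]; ring
        rw [hsum] at hdiag
        have hcard : (1:ℝ) ≤ (D.card : ℝ) := by
          exact_mod_cast Finset.card_pos.mpr ⟨j₀, hj₀D⟩
        have hXneg : X = -Q - 1 := by linarith
        linarith
    -- conclude
    intro j hjA
    have hc := hcos1 j hjA
    have hs := hsin0 j hjA
    have e1 : Real.cos (θ j) = Real.cos (θ A) := by
      have : Real.cos ((θ j - θ A) + θ A) = Real.cos (θ j) := by ring_nf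
      rw [← this, Real.cos_add, hc, hs]; ring
    have e2 : Real.sin (θ j) = Real.sin (θ A) := by
      have : Real.sin ((θ j - θ A) + θ A) = Real.sin (θ j) := by ring_nf
      rw [← this, Real.sin_add, hc, hs]; ring
    unfold phasor
    rw [e1, e2]
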